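/- Assume in addition that F'(r) > 0 for all r ∈ I and that equation (hF_eqn) holds at every r ∈ I, and fix r₀ ∈ I. Then for every r ∈ I, h(F(r))^{−n/2}·ḣ(F(r)) = h(F(r₀))^{−n/2}·ḣ(F(r₀)) · exp( −∫_{r₀}^r ( (n−1)/√(F(s)) + F''(s)/F'(s) ) ds ). (This is a rigorous form of the paper's integrated formula (4.7) for ḣ, obtained by integrating equation (4.5).) -/

import Mathlib

open Real Set

theorem stmt_12 {n : ℕ} (hn : 3 ≤ n)
    (I : Set ℝ) (hI_open : IsOpen I) (hI_conn : Convex ℝ I) (hI_pos : I ⊆ Ioi 0)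
    (J : Set ℝ) (hJ_open : IsOpen J) (hJ_conn : Convex ℝ J) (hJ_pos : J ⊆ Ioi 0)
    (F : ℝ → ℝ) (hF : ContDiffOn ℝ 2 F I) (hF_pos : ∀ r ∈ I, 0 < F r)
    (hFJ : ∀ r ∈ I, F r ∈ J)
    (h : ℝ → ℝ) (hh : ContDiffOn ℝ 2 h J) (hh_pos : ∀ y ∈ J, 0 < h y)
    (hF' : ∀ r ∈ I, 0 < deriv F r)
    (heqn : ∀ r ∈ I,
      -((n : ℝ) / 2) * (deriv h (F r) * deriv F r) ^ 2
        + h (F r) * (deriv (deriv h) (F r) * (deriv F r) ^ 2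
          + (((n : ℝ) - 1) / Real.sqrt (F r)) * deriv h (F r) * deriv F r
          + deriv h (F r) * deriv (deriv F) r) = 0)
    (r₀ : ℝ) (hr₀ : r₀ ∈ I) :
    ∀ r ∈ I,
      h (F r) ^ (-(n : ℝ) / 2) * deriv h (F r)
        = h (F r₀) ^ (-(n : ℝ) / 2) * deriv h (F r₀)
          * Real.exp (-∫ s in r₀..r,
              (((n : ℝ) - 1) / Real.sqrt (F s) + deriv (deriv F) s / deriv F s)) := by
  set c : ℝ := -(n : ℝ) / 2 with hc
  set k : ℝ → ℝ := fun s => ((n : ℝ) - 1) / Real.sqrt (F s) + deriv (deriv F) s / deriv F s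
    with hk
  set g : ℝ → ℝ := fun r => h (F r) ^ c * deriv h (F r) with hg
  set G : ℝ → ℝ := fun r => ∫ s in r₀..r, k s with hG
  -- continuity facts
  have hF'cd : ContDiffOn ℝ 1 (deriv F) I := by
    have := hF.deriv_of_isOpen (m := 1) hI_open (by norm_num)
    exact this
  have hF'cont : ContinuousOn (deriv F) I := hF'cd.continuousOn
  have hF''cont : ContinuousOn (deriv (deriv F)) I :=
    hF'cd.continuousOn_deriv_of_isOpen hI_open le_rfl
  have hFcont : ContinuousOn F I := hF.continuousOn
  have hkcont : ContinuousOn k I := by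
    apply ContinuousOn.add
    · apply ContinuousOn.div continuousOn_const
        (Real.continuous_sqrt.comp_continuousOn hFcont)
      intro x hx
      exact (Real.sqrt_pos.2 (hF_pos x hx)).ne'
    · exact hF''cont.div hF'cont fun x hx => (hF' x hx).ne'
  -- differentiability of h, deriv h on J
  have hh'cd : ContDiffOn ℝ 1 (deriv h) J := by
    have := hh.deriv_of_isOpen (m := 1) hJ_open (by norm_num)
    exact this
  -- derivative of g at points of I
  have hgderiv : ∀ r ∈ I, HasDerivAt g (-(k r) * g r) r := by
    intro r hr
    have hrI : I ∈ nhds r := hI_open.mem_nhds hr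
    have hFJr : J ∈ nhds (F r) := hJ_open.mem_nhds (hFJ r hr)
    have hFd : HasDerivAt F (deriv F r) r :=
      (((hF.differentiableOn (by norm_num)).differentiableAt hrI)).hasDerivAt
    have hhd : HasDerivAt h (deriv h (F r)) (F r) :=
      ((hh.differentiableOn (by norm_num)).differentiableAt hFJr).hasDerivAt
    have hh'd : HasDerivAt (deriv h) (deriv (deriv h) (F r)) (F r) :=
      ((hh'cd.differentiableOn (by norm_num)).differentiableAt hFJr).hasDerivAt
    have hH : 0 < h (F r) := hh_pos _ (hFJ r hr)
    have hcomp : HasDerivAt (fun r => h (F r)) (deriv h (F r) * deriv F r) r :=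
      hhd.comp r hFd
    have hcomp' : HasDerivAt (fun r => deriv h (F r)) (deriv (deriv h) (F r) * deriv F r) r :=
      hh'd.comp r hFd
    have hrpow : HasDerivAt (fun x : ℝ => x ^ c) (c * h (F r) ^ (c - 1)) (h (F r)) :=
      Real.hasDerivAt_rpow_const (Or.inl hH.ne')
    have hpowcomp : HasDerivAt (fun r => h (F r) ^ c)
        (c * h (F r) ^ (c - 1) * (deriv h (F r) * deriv F r)) r :=
      by have := hrpow.comp r hcomp; exact this
    have hprod : HasDerivAt (fun y => h (F y) ^ c * deriv h (F y))
        (c * h (F r) ^ (c - 1) * (deriv h (F r) * deriv F r) * deriv h (F r)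
          + h (F r) ^ c * (deriv (deriv h) (F r) * deriv F r)) r :=
      hpowcomp.mul hcomp'
    convert hprod using 1
    -- algebraic identity from the equation
    have E := heqn r hr
    have hF'r : (0:ℝ) < deriv F r := hF' r hr
    have hs : (0:ℝ) < Real.sqrt (F r) := Real.sqrt_pos.2 (hF_pos r hr)
    have hHc : h (F r) ^ c = h (F r) ^ (c - 1) * h (F r) := by
      rw [← Real.rpow_add_one hH.ne' (c - 1)]
      ring_nf
    simp only [hk, hg, hHc]
    set A := h (F r) ^ (c - 1)
    set H := h (F r)
    set D := deriv h (F r)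
    set D2 := deriv (deriv h) (F r)
    set P := deriv F r
    set Q := deriv (deriv F) r
    set S := Real.sqrt (F r)
    field_simp at E ⊢
    linear_combination (-A/2) * E + (-(A*D^2*P^2*S)) * hc
  have hGderiv : ∀ r ∈ I, HasDerivAt G (k r) r := by
    intro r hr
    have hsub : uIcc r₀ r ⊆ I := hI_conn.ordConnected.uIcc_subset hr₀ hr
    have hint : IntervalIntegrable k MeasureTheory.volume r₀ r :=
      (hkcont.mono hsub).intervalIntegrable
    have hmeas : StronglyMeasurableAtFilter k (nhds r) :=
      ⟨I, hI_open.mem_nhds hr, hkcont.aestronglyMeasurable hI_open.measurableSet⟩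
    exact intervalIntegral.integral_hasDerivAt_right hint hmeas
      (hkcont.continuousAt (hI_open.mem_nhds hr))
  set φ : ℝ → ℝ := fun r => g r * Real.exp (G r) with hφ
  have hφderiv : ∀ r ∈ I, HasDerivAt φ 0 r := by
    intro r hr
    have hd : HasDerivAt (fun y => g y * Real.exp (G y))
        (-(k r) * g r * Real.exp (G r) + g r * (Real.exp (G r) * k r)) r :=
      (hgderiv r hr).mul ((hGderiv r hr).exp)
    convert hd using 1
    ring
  have hconst : ∀ r ∈ I, φ r = φ r₀ := by
    intro r hr
    have hdiff : DifferentiableOn ℝ φ I := fun x hx =>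
      ((hφderiv x hx).differentiableAt).differentiableWithinAt
    have h0 : ∀ x ∈ I, fderivWithin ℝ φ I x = 0 := by
      intro x hx
      rw [fderivWithin_of_isOpen hI_open hx, (hφderiv x hx).hasFDerivAt.fderiv]
      ext y
      simp
    exact hI_conn.is_const_of_fderivWithin_eq_zero hdiff h0 hr hr₀
  intro r hr
  have hc1 : g r * Real.exp (G r) = g r₀ * Real.exp (G r₀) := hconst r hr
  have hG0 : G r₀ = 0 := intervalIntegral.integral_same
  rw [hG0, Real.exp_zero, mul_one] at hc1
  show g r = g r₀ * Real.exp (-G r)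
  have hexp : Real.exp (G r) * Real.exp (-G r) = 1 := by
    rw [← Real.exp_add]
    simp
  calc g r = g r * (Real.exp (G r) * Real.exp (-G r)) := by rw [hexp, mul_one]
    _ = g r * Real.exp (G r) * Real.exp (-G r) := by ring
    _ = g r₀ * Real.exp (-G r) := by rw [hc1]
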